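/- Let P = (ρ₁ e^{iθ₁}, ρ₂ e^{iθ₂}) ∈ ℂ² with ρ₁, ρ₂ ≥ 0 and ρ₁ ≠ ρ₂. If P₁ and P₂ are points of Γ with |P₁ − P| = |P₂ − P| = dist(P, Γ), then P₁ = P₂; that is, points whose two complex coordinates have distinct moduli have a unique closest point on Γ. -/

import Mathlib

/- STATEMENT 6: points with distinct moduli of the two complex coordinates have a unique closest point on Γ. -/

noncomputable section

open Complex Metric
open scoped Real

/-- ℂ² with the Euclidean (ℝ⁴) distance. -/
abbrev C2 : Type := EuclideanSpace ℂ (Fin 2)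

/-- The point (z, w) ∈ ℂ². -/
def pt (z w : ℂ) : C2 := (WithLp.equiv 2 (Fin 2 → ℂ)).symm ![z, w]

/-- The point of Γ with parameters (ρ, θ). -/
def gpt (ρ θ : ℝ) : C2 :=
  pt (((Real.sqrt 2 / 2 * ρ : ℝ) : ℂ) * Complex.exp ((θ : ℂ) * Complex.I))
     (((Real.sqrt 2 / 2 * ρ⁻¹ : ℝ) : ℂ) * Complex.exp ((θ : ℂ) * Complex.I))

/-- The special Lagrangian surface Γ ⊂ ℂ². -/
def Gam : Set C2 := {p | ∃ ρ θ : ℝ, 0 < ρ ∧ p = gpt ρ θ}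

/-- The point (ρ₁ e^{iθ₁}, ρ₂ e^{iθ₂}) ∈ ℂ². -/
def ppt (ρ₁ θ₁ ρ₂ θ₂ : ℝ) : C2 :=
  pt ((ρ₁ : ℂ) * Complex.exp ((θ₁ : ℂ) * Complex.I))
     ((ρ₂ : ℂ) * Complex.exp ((θ₂ : ℂ) * Complex.I))


/-! ### Auxiliary definitions for the proof -/

/-- Q(r) = ρ₁²r² + ρ₂²/r² + c, the squared norm of r·ρ₁·e^{iθ₁} + (ρ₂/r)·e^{iθ₂}. -/
def Qf (a b c r : ℝ) : ℝ := a^2*r^2 + b^2/r^2 + c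
/-- E(r): squared distance minimized over the angle (up to the constant ρ₁²+ρ₂²). -/
def Ef (a b c r : ℝ) : ℝ := (r^2 + 1/r^2)/2 - Real.sqrt 2 * Real.sqrt (Qf a b c r)
/-- derivative of E -/
def Ef' (a b c r : ℝ) : ℝ :=
  r - 1/r^3 - Real.sqrt 2 * ((a^2*r - b^2/r^3)/Real.sqrt (Qf a b c r))
/-- second derivative of E -/
def Ef2 (a b c r : ℝ) : ℝ :=
  1 + 3/r^4 - Real.sqrt 2 * ((a^2 + 3*b^2/r^4)/Real.sqrt (Qf a b c r)
    - (a^2*r - b^2/r^3)^2/(Real.sqrt (Qf a b c r))^3)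
/-- squared distance from gpt r θ to ppt ρ₁ θ₁ ρ₂ θ₂. -/
def Dfun (ρ₁ θ₁ ρ₂ θ₂ r θ : ℝ) : ℝ :=
  ρ₁^2 + ρ₂^2 + (r^2 + 1/r^2)/2
    - Real.sqrt 2 * (r*ρ₁*Real.cos (θ-θ₁) + (1/r)*ρ₂*Real.cos (θ-θ₂))

lemma Dfun_swap (ρ₁ θ₁ ρ₂ θ₂ r θ : ℝ) (hr : r ≠ 0) :
    Dfun ρ₂ θ₂ ρ₁ θ₁ (1/r) θ = Dfun ρ₁ θ₁ ρ₂ θ₂ r θ := by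
  unfold Dfun
  field_simp
  ring

lemma hasDerivAt_Qf (a b c r : ℝ) (hr : r ≠ 0) :
    HasDerivAt (Qf a b c) (2*a^2*r - 2*b^2/r^3) r := by
  have h1 : HasDerivAt (fun x : ℝ => x^2) (2*r) r := by simpa using hasDerivAt_pow 2 r
  have h2 : HasDerivAt (fun x : ℝ => a^2*x^2) (a^2*(2*r)) r := h1.const_mul _
  have h3 : HasDerivAt (fun x : ℝ => b^2/x^2) (b^2 * (-(2*r)/(r^2)^2)) r := by
    simpa [div_eq_mul_inv] using (h1.inv (pow_ne_zero 2 hr)).const_mul (b^2)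
  have := (h2.add h3).add_const c
  refine this.congr_deriv ?_
  field_simp
  ring

lemma hasDerivAt_Ef (a b c r : ℝ) (hr : r ≠ 0) (hQ : 0 < Qf a b c r) :
    HasDerivAt (Ef a b c) (Ef' a b c r) r := by
  have hs : Real.sqrt (Qf a b c r) ≠ 0 := by positivity
  have h1 : HasDerivAt (fun x : ℝ => x^2) (2*r) r := by simpa using hasDerivAt_pow 2 r
  have h3 : HasDerivAt (fun x : ℝ => 1/x^2) (-(2*r)/(r^2)^2) r := by
    simpa [one_div, Pi.inv_def] using h1.inv (pow_ne_zero 2 hr)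
  have hsq : HasDerivAt (fun x => Real.sqrt (Qf a b c x))
      ((2*a^2*r - 2*b^2/r^3) / (2 * Real.sqrt (Qf a b c r))) r :=
    (hasDerivAt_Qf a b c r hr).sqrt (ne_of_gt hQ)
  have := (((h1.add h3).div_const 2).sub (hsq.const_mul (Real.sqrt 2)))
  refine this.congr_deriv ?_
  unfold Ef'
  field_simp
  ring

lemma hasDerivAt_Ef' (a b c r : ℝ) (hr : r ≠ 0) (hQ : 0 < Qf a b c r) :
    HasDerivAt (Ef' a b c) (Ef2 a b c r) r := by
  have hs : Real.sqrt (Qf a b c r) ≠ 0 := by positivity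
  have h1 : HasDerivAt (fun x : ℝ => x^3) (3*r^2) r := by simpa using hasDerivAt_pow 3 r
  have h3 : HasDerivAt (fun x : ℝ => 1/x^3) (-(3*r^2)/(r^3)^2) r := by
    simpa [one_div, Pi.inv_def] using h1.inv (pow_ne_zero 3 hr)
  have h3' : HasDerivAt (fun x : ℝ => b^2/x^3) (b^2 * (-(3*r^2)/(r^3)^2)) r := by
    simpa [div_eq_mul_inv] using (h1.inv (pow_ne_zero 3 hr)).const_mul (b^2)
  have hP : HasDerivAt (fun x : ℝ => a^2*x - b^2/x^3) (a^2 + 3*b^2/r^4) r := by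
    have := ((hasDerivAt_id r).const_mul (a^2)).sub h3'
    refine this.congr_deriv ?_
    field_simp
    ring
  have hsq : HasDerivAt (fun x => Real.sqrt (Qf a b c x))
      ((2*a^2*r - 2*b^2/r^3) / (2 * Real.sqrt (Qf a b c r))) r :=
    (hasDerivAt_Qf a b c r hr).sqrt (ne_of_gt hQ)
  have hdiv := hP.div hsq hs
  have := ((hasDerivAt_id r).sub h3).sub (hdiv.const_mul (Real.sqrt 2))
  refine this.congr_deriv ?_
  unfold Ef2
  set s := Real.sqrt (Qf a b c r) with hsdef
  field_simp
  ring

lemma Qf_pos (a b c : ℝ) (hb : 0 ≤ b) (hab : b < a) (hc : -(2*a*b) ≤ c)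
    (r : ℝ) (hr : 1 ≤ r) : 0 < Qf a b c r := by
  have hr0 : 0 < r := lt_of_lt_of_le one_pos hr
  have h1 : b/r ≤ b := by
    rw [div_le_iff₀ hr0]; nlinarith
  have h2 : a ≤ a*r := by nlinarith [hb.trans_lt hab]
  have h3 : 0 < a*r - b/r := by linarith
  have h4 : Qf a b c r = (a*r - b/r)^2 + (c + 2*a*b) := by
    unfold Qf; field_simp; ring
  nlinarith


lemma ef2_pos_aux (s P P' w k4 d : ℝ) (hs : 0 < s) (hw : 0 < w) (hP : 0 < P)
    (hkey : k4*P - w*P' = d) (hd : 0 < d) (hws : Real.sqrt 2 * P = w*s) :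
    Real.sqrt 2 * (P'/s - P^2/s^3) < k4 := by
  have key : w*(P'*s^2 - P^2) < k4*(P*s^2) := by
    have h5 : s^2*(k4*P - w*P') = s^2*d := by rw [hkey]
    nlinarith [mul_pos (mul_pos hs hs) hd, mul_pos hw (mul_pos hP hP)]
  have hXs3 : (P'/s - P^2/s^3) * s^3 = P'*s^2 - P^2 := by field_simp
  have hid : Real.sqrt 2 * (P'/s - P^2/s^3) * (s^3*P) = (w*(P'*s^2 - P^2)) * s := by
    calc Real.sqrt 2 * (P'/s - P^2/s^3) * (s^3*P)
        = (Real.sqrt 2 * P) * ((P'/s - P^2/s^3) * s^3) := by ring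
      _ = (w*s) * (P'*s^2 - P^2) := by rw [hws, hXs3]
      _ = (w*(P'*s^2 - P^2)) * s := by ring
  have hfin : Real.sqrt 2 * (P'/s - P^2/s^3) * (s^3*P) < k4 * (s^3*P) := by
    rw [hid]
    nlinarith [mul_lt_mul_of_pos_right key hs]
  have hsP : 0 < s^3*P := by positivity
  exact lt_of_mul_lt_mul_right hfin hsP.le

lemma Ef2_pos (a b c r : ℝ) (hb : 0 ≤ b) (hab : b < a) (hr : 1 < r)
    (hQ : 0 < Qf a b c r) (hcrit : Ef' a b c r = 0) : 0 < Ef2 a b c r := by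
  have hr0 : 0 < r := lt_trans one_pos hr
  have hs : 0 < Real.sqrt (Qf a b c r) := Real.sqrt_pos.mpr hQ
  have hw : 0 < r - 1/r^3 := by
    have h4 : (1:ℝ) < r^4 := one_lt_pow₀ hr (by norm_num)
    rw [sub_pos, div_lt_iff₀ (by positivity : (0:ℝ) < r^3)]
    nlinarith
  have hws : Real.sqrt 2 * (a^2*r - b^2/r^3) = (r - 1/r^3) * Real.sqrt (Qf a b c r) := by
    have h0 : (r - 1/r^3) - Real.sqrt 2 * ((a^2*r - b^2/r^3)/Real.sqrt (Qf a b c r)) = 0 :=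
      hcrit
    have h1 : Real.sqrt 2 * ((a^2*r - b^2/r^3)/Real.sqrt (Qf a b c r)) = r - 1/r^3 := by
      linarith
    calc Real.sqrt 2 * (a^2*r - b^2/r^3)
        = Real.sqrt 2 * ((a^2*r - b^2/r^3)/Real.sqrt (Qf a b c r)) * Real.sqrt (Qf a b c r) := by
          field_simp
      _ = (r - 1/r^3) * Real.sqrt (Qf a b c r) := by rw [h1]
  have hP : 0 < a^2*r - b^2/r^3 := by
    have hpos : 0 < Real.sqrt 2 * (a^2*r - b^2/r^3) := hws ▸ mul_pos hw hs
    have h2 : (0:ℝ) < Real.sqrt 2 := by positivity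
    nlinarith
  have hkey : (1 + 3/r^4)*(a^2*r - b^2/r^3) - (r - 1/r^3)*(a^2 + 3*b^2/r^4)
      = 4*(a^2 - b^2)/r^3 := by
    field_simp; ring
  have hd : 0 < 4*(a^2 - b^2)/r^3 := by
    have : 0 < a^2 - b^2 := by nlinarith
    positivity
  have := ef2_pos_aux (Real.sqrt (Qf a b c r)) (a^2*r - b^2/r^3) (a^2 + 3*b^2/r^4)
    (r - 1/r^3) (1 + 3/r^4) (4*(a^2 - b^2)/r^3) hs hw hP hkey hd hws
  unfold Ef2
  linarith

lemma Qf_nonneg (a b c : ℝ) (hb : 0 ≤ b) (hab : b < a) (hc : -(2*a*b) ≤ c)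
    (r : ℝ) (hr : 0 < r) : 0 ≤ Qf a b c r := by
  have h4 : Qf a b c r = (a*r - b/r)^2 + (c + 2*a*b) := by
    unfold Qf; field_simp; ring
  nlinarith [sq_nonneg (a*r - b/r)]

lemma min_gt_one (a b c : ℝ) (hb : 0 ≤ b) (hab : b < a) (hc : -(2*a*b) ≤ c)
    (r₀ : ℝ) (h0 : 0 < r₀) (m : ∀ r, 0 < r → Ef a b c r₀ ≤ Ef a b c r) : 1 < r₀ := by
  have ha : 0 < a := hb.trans_lt hab
  rcases lt_trichotomy r₀ 1 with hlt | heq | hgt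
  · -- then Ef (1/r₀) < Ef r₀, contradiction
    exfalso
    have hinv : (0:ℝ) < 1/r₀ := by positivity
    have hQlt : Qf a b c r₀ < Qf a b c (1/r₀) := by
      have h1 : 0 < 1/r₀^2 - r₀^2 := by
        have h1a : r₀^2 < 1 := by nlinarith
        have h1b : (1:ℝ) < 1/r₀^2 := by rw [lt_div_iff₀ (by positivity)]; linarith
        linarith
      have h2 : 0 < a^2 - b^2 := by nlinarith
      have key : Qf a b c (1/r₀) - Qf a b c r₀ = (a^2-b^2)*(1/r₀^2 - r₀^2) := by
        unfold Qf; field_simp; ring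
      nlinarith [mul_pos h2 h1]
    have hsq : Real.sqrt (Qf a b c r₀) < Real.sqrt (Qf a b c (1/r₀)) :=
      Real.sqrt_lt_sqrt (Qf_nonneg a b c hb hab hc r₀ h0) hQlt
    have hEf : Ef a b c (1/r₀) < Ef a b c r₀ := by
      unfold Ef
      have e1 : ((1/r₀)^2 + 1/(1/r₀)^2)/2 = (r₀^2 + 1/r₀^2)/2 := by field_simp; ring
      rw [e1]
      have h2 : (0:ℝ) < Real.sqrt 2 := by positivity
      nlinarith
    exact absurd (m (1/r₀) hinv) (not_le.mpr hEf)
  · -- r₀ = 1 : local min but Ef' 1 < 0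
    exfalso
    subst heq
    have hQ1 : 0 < Qf a b c 1 := Qf_pos a b c hb hab hc 1 le_rfl
    have hloc : IsLocalMin (Ef a b c) 1 := by
      filter_upwards [isOpen_Ioi.mem_nhds (show (1:ℝ) ∈ Set.Ioi (0:ℝ) by norm_num)] with y hy
      exact m y hy
    have hcrit : Ef' a b c 1 = 0 :=
      hloc.hasDerivAt_eq_zero (hasDerivAt_Ef a b c 1 one_ne_zero hQ1)
    have hneg : Ef' a b c 1 < 0 := by
      unfold Ef'
      have h2 : (0:ℝ) < Real.sqrt 2 := by positivity
      have h3 : 0 < Real.sqrt (Qf a b c 1) := Real.sqrt_pos.mpr hQ1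
      have h4 : 0 < (a^2*1 - b^2/1^3) / Real.sqrt (Qf a b c 1) := by
        apply div_pos _ h3
        nlinarith
      nlinarith
    linarith
  · exact hgt


lemma no_two_min (a b c : ℝ) (hb : 0 ≤ b) (hab : b < a) (hc : -(2*a*b) ≤ c)
    (s t : ℝ) (hs1 : 1 < s) (hst : s < t)
    (ms : ∀ r, 0 < r → Ef a b c s ≤ Ef a b c r)
    (mt : ∀ r, 0 < r → Ef a b c t ≤ Ef a b c r) : False := by
  have hs0 : 0 < s := lt_trans one_pos hs1
  have ht0 : 0 < t := lt_trans hs0 hst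
  have hgt1 : ∀ x, s ≤ x → 1 < x := fun x hx => lt_of_lt_of_le hs1 hx
  have hQpos : ∀ x, s ≤ x → 0 < Qf a b c x := fun x hx =>
    Qf_pos a b c hb hab hc x (le_of_lt (hgt1 x hx))
  have hder : ∀ x, s ≤ x → HasDerivAt (Ef a b c) (Ef' a b c x) x := fun x hx =>
    hasDerivAt_Ef a b c x (ne_of_gt (lt_trans one_pos (hgt1 x hx))) (hQpos x hx)
  have hcont : ContinuousOn (Ef a b c) (Set.Icc s t) := fun x hx =>
    ((hder x hx.1).continuousAt).continuousWithinAt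
  have hEfst : Ef a b c s = Ef a b c t := le_antisymm (ms t ht0) (mt s hs0)
  -- find an interior maximum point
  obtain ⟨c₁, hc₁mem, hc₁max⟩ : ∃ c₁ ∈ Set.Ioo s t,
      ∀ x ∈ Set.Icc s t, Ef a b c x ≤ Ef a b c c₁ := by
    obtain ⟨c₀, hc₀mem, hc₀max⟩ := isCompact_Icc.exists_isMaxOn
      (Set.nonempty_Icc.mpr hst.le) hcont
    have hc₀max' : ∀ x ∈ Set.Icc s t, Ef a b c x ≤ Ef a b c c₀ := fun x hx => hc₀max hx
    by_cases hEc : Ef a b c c₀ = Ef a b c s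
    · refine ⟨(s+t)/2, ⟨by linarith, by linarith⟩, fun x hx => ?_⟩
      have h1 : Ef a b c ((s+t)/2) ≤ Ef a b c s := hEc ▸ hc₀max' _ ⟨by linarith, by linarith⟩
      have h2 : Ef a b c s ≤ Ef a b c ((s+t)/2) := ms _ (by linarith)
      calc Ef a b c x ≤ Ef a b c c₀ := hc₀max' x hx
        _ = Ef a b c s := hEc
        _ = Ef a b c ((s+t)/2) := le_antisymm h2 h1
    · refine ⟨c₀, ⟨lt_of_le_of_ne hc₀mem.1 ?_, lt_of_le_of_ne hc₀mem.2 ?_⟩, hc₀max'⟩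
      · intro h; exact hEc (by rw [← h])
      · intro h; exact hEc (by rw [h, ← hEfst])
  have hc₁s : s < c₁ := hc₁mem.1
  have hc₁t : c₁ < t := hc₁mem.2
  have hc₁1 : 1 < c₁ := hgt1 c₁ hc₁s.le
  have hc₁0 : (0:ℝ) < c₁ := lt_trans one_pos hc₁1
  have hQc₁ : 0 < Qf a b c c₁ := hQpos c₁ hc₁s.le
  -- c₁ is a local max, so Ef' c₁ = 0
  have hloc : IsLocalMax (Ef a b c) c₁ := by
    filter_upwards [isOpen_Ioo.mem_nhds (⟨hc₁s, hc₁t⟩ : c₁ ∈ Set.Ioo s t)] with y hy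
    exact hc₁max y (Set.mem_Icc_of_Ioo hy)
  have hcrit : Ef' a b c c₁ = 0 :=
    hloc.hasDerivAt_eq_zero (hder c₁ hc₁s.le)
  -- second derivative is positive at c₁
  have hpos2 : 0 < Ef2 a b c c₁ := Ef2_pos a b c c₁ hb hab hc₁1 hQc₁ hcrit
  -- hence Ef' > 0 just to the right of c₁
  have htend := hasDerivAt_iff_tendsto_slope.mp (hasDerivAt_Ef' a b c c₁ (ne_of_gt hc₁0) hQc₁)
  have hev : ∀ᶠ x in nhdsWithin c₁ (Set.Ioi c₁), 0 < slope (Ef' a b c) c₁ x := by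
    have h1 : ∀ᶠ x in nhdsWithin c₁ {c₁}ᶜ, 0 < slope (Ef' a b c) c₁ x :=
      htend.eventually (eventually_gt_nhds hpos2)
    exact h1.filter_mono (nhdsWithin_mono c₁ (fun x hx => ne_of_gt hx))
  rw [eventually_nhdsWithin_iff, Metric.eventually_nhds_iff] at hev
  obtain ⟨ε, hε, hball⟩ := hev
  set x₀ := min (c₁ + ε/2) ((c₁ + t)/2) with hx₀def
  have hx₀1 : c₁ < x₀ := lt_min (by linarith) (by linarith)
  have hx₀t : x₀ < t := lt_of_le_of_lt (min_le_right _ _) (by linarith)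
  have hx₀ε : x₀ - c₁ < ε := by
    have := min_le_left (c₁ + ε/2) ((c₁ + t)/2)
    have : x₀ ≤ c₁ + ε/2 := this
    linarith
  have hEf'pos : ∀ x ∈ Set.Ioo c₁ x₀, 0 < Ef' a b c x := by
    intro x hx
    have hdist : dist x c₁ < ε := by
      rw [Real.dist_eq, abs_of_pos (by linarith [hx.1] : (0:ℝ) < x - c₁)]
      linarith [hx.2]
    have hslope := hball hdist (Set.mem_Ioi.mpr hx.1)
    rw [slope_def_field, hcrit, sub_zero] at hslope
    have hx1 : 0 < x - c₁ := by linarith [hx.1]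
    have := mul_pos hslope hx1
    rw [div_mul_cancel₀ _ (ne_of_gt hx1)] at this
    exact this
  -- MVT on [c₁, x₀] gives a point where Ef' > 0, so Ef x₀ > Ef c₁, contradiction
  obtain ⟨ξ, hξmem, hξ⟩ := exists_hasDerivAt_eq_slope (Ef a b c) (Ef' a b c) hx₀1
    (fun x hx => ((hder x (le_trans hc₁s.le hx.1)).continuousAt).continuousWithinAt)
    (fun x hx => hder x (le_trans hc₁s.le hx.1.le))
  have hξpos : 0 < Ef' a b c ξ := hEf'pos ξ hξmem
  rw [hξ] at hξpos
  have hx₀c₁ : 0 < x₀ - c₁ := by linarith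
  have hgt : Ef a b c c₁ < Ef a b c x₀ := by
    have := mul_pos hξpos hx₀c₁
    rw [div_mul_cancel₀ _ (ne_of_gt hx₀c₁)] at this
    linarith
  have hle : Ef a b c x₀ ≤ Ef a b c c₁ :=
    hc₁max x₀ ⟨by linarith, hx₀t.le⟩
  linarith

lemma ef_min_unique (a b c : ℝ) (hb : 0 ≤ b) (hab : b < a) (hc : -(2*a*b) ≤ c)
    (r₁ r₂ : ℝ) (h₁ : 0 < r₁) (h₂ : 0 < r₂)
    (m₁ : ∀ r, 0 < r → Ef a b c r₁ ≤ Ef a b c r)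
    (m₂ : ∀ r, 0 < r → Ef a b c r₂ ≤ Ef a b c r) : r₁ = r₂ ∧ 1 < r₁ := by
  have hg₁ := min_gt_one a b c hb hab hc r₁ h₁ m₁
  have hg₂ := min_gt_one a b c hb hab hc r₂ h₂ m₂
  refine ⟨?_, hg₁⟩
  rcases lt_trichotomy r₁ r₂ with h|h|h
  · exact (no_two_min a b c hb hab hc r₁ r₂ hg₁ h m₁ m₂).elim
  · exact h
  · exact (no_two_min a b c hb hab hc r₂ r₁ hg₂ h m₂ m₁).elim

lemma abs_sub_exp_sq (x y α β : ℝ) :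
    ‖(x:ℂ)*Complex.exp ((α:ℂ)*I) - (y:ℂ)*Complex.exp ((β:ℂ)*I)‖^2
      = x^2 + y^2 - 2*x*y*Real.cos (α-β) := by
  rw [Complex.sq_norm, Complex.normSq_apply]
  simp [Complex.exp_mul_I, Complex.cos_ofReal_re, Complex.sin_ofReal_re]
  rw [Real.cos_sub]
  nlinarith [Real.sin_sq_add_cos_sq α, Real.sin_sq_add_cos_sq β]

lemma dist_sq_gpt (r θ ρ₁ θ₁ ρ₂ θ₂ : ℝ) (hr : 0 < r) :
    dist (gpt r θ) (ppt ρ₁ θ₁ ρ₂ θ₂)^2 = Dfun ρ₁ θ₁ ρ₂ θ₂ r θ := by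
  have h0 : gpt r θ 0 = ((Real.sqrt 2 / 2 * r : ℝ) : ℂ) * Complex.exp ((θ : ℂ) * I) := rfl
  have h1 : gpt r θ 1 = ((Real.sqrt 2 / 2 * r⁻¹ : ℝ) : ℂ) * Complex.exp ((θ : ℂ) * I) := rfl
  have g0 : ppt ρ₁ θ₁ ρ₂ θ₂ 0 = ((ρ₁ : ℂ)) * Complex.exp ((θ₁ : ℂ) * I) := rfl
  have g1 : ppt ρ₁ θ₁ ρ₂ θ₂ 1 = ((ρ₂ : ℂ)) * Complex.exp ((θ₂ : ℂ) * I) := rfl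
  rw [EuclideanSpace.dist_eq, Real.sq_sqrt (by positivity)]
  rw [Fin.sum_univ_two, h0, h1, g0, g1]
  rw [Complex.dist_eq, Complex.dist_eq]
  rw [abs_sub_exp_sq (Real.sqrt 2/2*r) ρ₁ θ θ₁, abs_sub_exp_sq (Real.sqrt 2/2*r⁻¹) ρ₂ θ θ₂]
  have h2 : Real.sqrt 2 ^ 2 = 2 := Real.sq_sqrt (by norm_num)
  have e : ∀ u:ℝ, (Real.sqrt 2/2*u)^2 = u^2/2 := by
    intro u; rw [mul_pow, div_pow, h2]; ring
  rw [e r, e r⁻¹]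
  unfold Dfun
  have hrne : r ≠ 0 := ne_of_gt hr
  field_simp
  ring

lemma abs_add_exp_sq (x y α β : ℝ) :
    ‖(x:ℂ)*Complex.exp ((α:ℂ)*I) + (y:ℂ)*Complex.exp ((β:ℂ)*I)‖^2
      = x^2 + y^2 + 2*x*y*Real.cos (α-β) := by
  rw [Complex.sq_norm, Complex.normSq_apply]
  simp [Complex.exp_mul_I, Complex.cos_ofReal_re, Complex.sin_ofReal_re]
  rw [Real.cos_sub]
  nlinarith [Real.sin_sq_add_cos_sq α, Real.sin_sq_add_cos_sq β]

lemma re_exp_neg (θ u₁ u₂ θ₁ θ₂ : ℝ) :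
    (Complex.exp (-(θ:ℂ)*I) * ((u₁:ℂ)*Complex.exp ((θ₁:ℂ)*I)
      + (u₂:ℂ)*Complex.exp ((θ₂:ℂ)*I))).re
      = u₁*Real.cos (θ-θ₁) + u₂*Real.cos (θ-θ₂) := by
  simp [Complex.exp_mul_I, Complex.cos_ofReal_re, Complex.sin_ofReal_re,
    Complex.exp_re, Complex.exp_im]
  rw [Real.cos_sub, Real.cos_sub]
  ring

lemma eq_of_re_eq_abs (w : ℂ) (h : w.re = ‖w‖) : w = (‖w‖ : ℂ) := by
  have h2 : w.re^2 + w.im^2 = ‖w‖^2 := by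
    rw [Complex.sq_norm, Complex.normSq_apply]; ring
  have him : w.im = 0 := by
    rw [h] at h2
    have h3 : w.im^2 = 0 := by linarith
    exact pow_eq_zero_iff (by norm_num) |>.mp h3
  apply Complex.ext
  · simpa using h
  · simpa using him

lemma abs_exp_neg_I (θ : ℝ) : ‖Complex.exp (-(θ:ℂ)*I)‖ = 1 := by
  have h : -(θ:ℂ)*I = ((-θ:ℝ):ℂ)*I := by push_cast; ring
  rw [h, Complex.norm_exp_ofReal_mul_I]

lemma main_core (ρ₁ θ₁ ρ₂ θ₂ : ℝ) (h2 : 0 ≤ ρ₂) (hlt : ρ₂ < ρ₁)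
    (r₁ φ₁ r₂ φ₂ : ℝ) (hr₁ : 0 < r₁) (hr₂ : 0 < r₂)
    (m₁ : ∀ r θ, 0 < r → Dfun ρ₁ θ₁ ρ₂ θ₂ r₁ φ₁ ≤ Dfun ρ₁ θ₁ ρ₂ θ₂ r θ)
    (m₂ : ∀ r θ, 0 < r → Dfun ρ₁ θ₁ ρ₂ θ₂ r₂ φ₂ ≤ Dfun ρ₁ θ₁ ρ₂ θ₂ r θ) :
    r₁ = r₂ ∧ Complex.exp ((φ₁:ℂ) * I) = Complex.exp ((φ₂:ℂ) * I) := by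
  set cc : ℝ := 2*ρ₁*ρ₂*Real.cos (θ₁ - θ₂) with hccdef
  have hc : -(2*ρ₁*ρ₂) ≤ cc := by
    rw [hccdef]
    have := Real.neg_one_le_cos (θ₁ - θ₂)
    nlinarith [mul_nonneg (le_of_lt (h2.trans_lt hlt)) h2]
  set v : ℝ → ℂ := fun r => ((r*ρ₁:ℝ):ℂ)*Complex.exp ((θ₁:ℂ)*I)
    + ((ρ₂/r:ℝ):ℂ)*Complex.exp ((θ₂:ℂ)*I) with hvdef
  have habs : ∀ r : ℝ, 0 < r → Real.sqrt (Qf ρ₁ ρ₂ cc r) = ‖v r‖ := by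
    intro r hr
    have hsq : ‖v r‖^2 = Qf ρ₁ ρ₂ cc r := by
      rw [hvdef]
      rw [abs_add_exp_sq (r*ρ₁) (ρ₂/r) θ₁ θ₂]
      unfold Qf
      field_simp
      ring
    rw [← hsq, Real.sqrt_sq (norm_nonneg _)]
  have hDE : ∀ r θ : ℝ, 0 < r → Dfun ρ₁ θ₁ ρ₂ θ₂ r θ
      = ρ₁^2 + ρ₂^2 + (r^2 + 1/r^2)/2
        - Real.sqrt 2 * (Complex.exp (-(θ:ℂ)*I) * v r).re := by
    intro r θ hr
    rw [hvdef]
    rw [re_exp_neg θ (r*ρ₁) (ρ₂/r) θ₁ θ₂]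
    unfold Dfun
    ring
  have hge : ∀ r θ : ℝ, 0 < r →
      ρ₁^2 + ρ₂^2 + Ef ρ₁ ρ₂ cc r ≤ Dfun ρ₁ θ₁ ρ₂ θ₂ r θ := by
    intro r θ hr
    rw [hDE r θ hr]
    unfold Ef
    rw [habs r hr]
    have hre : (Complex.exp (-(θ:ℂ)*I) * v r).re ≤ ‖v r‖ := by
      calc (Complex.exp (-(θ:ℂ)*I) * v r).re ≤ ‖Complex.exp (-(θ:ℂ)*I) * v r‖ :=
            Complex.re_le_norm _
        _ = ‖v r‖ := by rw [norm_mul, abs_exp_neg_I, one_mul]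
    have hsqrt2 : (0:ℝ) ≤ Real.sqrt 2 := Real.sqrt_nonneg 2
    nlinarith
  have hopt : ∀ r : ℝ, 0 < r → Dfun ρ₁ θ₁ ρ₂ θ₂ r (Complex.arg (v r))
      = ρ₁^2 + ρ₂^2 + Ef ρ₁ ρ₂ cc r := by
    intro r hr
    rw [hDE r _ hr]
    have hcalc : Complex.exp (-((Complex.arg (v r):ℂ))*I) * v r = (‖v r‖ : ℂ) := by
      calc Complex.exp (-((Complex.arg (v r):ℂ))*I) * v r
          = Complex.exp (-((Complex.arg (v r):ℂ))*I)
              * ((‖v r‖:ℂ) * Complex.exp (((Complex.arg (v r):ℂ))*I)) := by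
            rw [Complex.norm_mul_exp_arg_mul_I]
        _ = (‖v r‖:ℂ)
              * Complex.exp (-((Complex.arg (v r):ℂ))*I + ((Complex.arg (v r):ℂ))*I) := by
            rw [Complex.exp_add]; ring
        _ = (‖v r‖:ℂ) := by simp
    have hre : (Complex.exp (-((Complex.arg (v r) : ℂ))*I) * v r).re = ‖v r‖ := by
      rw [hcalc]; simp
    rw [hre]
    unfold Ef
    rw [habs r hr]
    ring
  -- Ef-minimality
  have mE₁ : ∀ r, 0 < r → Ef ρ₁ ρ₂ cc r₁ ≤ Ef ρ₁ ρ₂ cc r := by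
    intro r hr
    have := (hge r₁ φ₁ hr₁).trans ((m₁ r (Complex.arg (v r)) hr).trans (hopt r hr).le)
    linarith
  have mE₂ : ∀ r, 0 < r → Ef ρ₁ ρ₂ cc r₂ ≤ Ef ρ₁ ρ₂ cc r := by
    intro r hr
    have := (hge r₂ φ₂ hr₂).trans ((m₂ r (Complex.arg (v r)) hr).trans (hopt r hr).le)
    linarith
  obtain ⟨heq, hone⟩ := ef_min_unique ρ₁ ρ₂ cc h2 hlt hc r₁ r₂ hr₁ hr₂ mE₁ mE₂
  subst heq
  refine ⟨rfl, ?_⟩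
  have hQ1 : 0 < Qf ρ₁ ρ₂ cc r₁ := Qf_pos ρ₁ ρ₂ cc h2 hlt hc r₁ hone.le
  have habspos : 0 < ‖v r₁‖ := by
    rw [← habs r₁ hr₁]; exact Real.sqrt_pos.mpr hQ1
  -- equality at the minimizers pins down the phases
  have key : ∀ φ : ℝ, Dfun ρ₁ θ₁ ρ₂ θ₂ r₁ φ = ρ₁^2 + ρ₂^2 + Ef ρ₁ ρ₂ cc r₁ →
      Complex.exp ((φ:ℂ)*I) * (‖v r₁‖ : ℂ) = v r₁ := by
    intro φ hmin
    rw [hDE r₁ φ hr₁] at hmin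
    unfold Ef at hmin
    rw [habs r₁ hr₁] at hmin
    have hsqrt2 : (0:ℝ) < Real.sqrt 2 := by positivity
    have hre : (Complex.exp (-(φ:ℂ)*I) * v r₁).re = ‖v r₁‖ := by
      have := mul_left_cancel₀ (ne_of_gt hsqrt2) (show Real.sqrt 2
          * (Complex.exp (-(φ:ℂ)*I) * v r₁).re
          = Real.sqrt 2 * ‖v r₁‖ from by linarith)
      exact this
    have habseq : ‖Complex.exp (-(φ:ℂ)*I) * v r₁‖ = ‖v r₁‖ := by
      rw [norm_mul, abs_exp_neg_I, one_mul]
    have hw := eq_of_re_eq_abs (Complex.exp (-(φ:ℂ)*I) * v r₁) (by rw [habseq, hre])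
    rw [habseq] at hw
    calc Complex.exp ((φ:ℂ)*I) * (‖v r₁‖ : ℂ)
        = Complex.exp ((φ:ℂ)*I) * (Complex.exp (-(φ:ℂ)*I) * v r₁) := by rw [hw]
      _ = Complex.exp ((φ:ℂ)*I + -(φ:ℂ)*I) * v r₁ := by rw [Complex.exp_add]; ring
      _ = v r₁ := by simp
  have hmin₁ : Dfun ρ₁ θ₁ ρ₂ θ₂ r₁ φ₁ = ρ₁^2 + ρ₂^2 + Ef ρ₁ ρ₂ cc r₁ :=
    le_antisymm (by rw [← hopt r₁ hr₁]; exact m₁ r₁ _ hr₁) (hge r₁ φ₁ hr₁)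
  have hmin₂ : Dfun ρ₁ θ₁ ρ₂ θ₂ r₁ φ₂ = ρ₁^2 + ρ₂^2 + Ef ρ₁ ρ₂ cc r₁ :=
    le_antisymm (by rw [← hopt r₁ hr₁]; exact m₂ r₁ _ hr₁) (hge r₁ φ₂ hr₁)
  have e₁ := key φ₁ hmin₁
  have e₂ := key φ₂ hmin₂
  have : Complex.exp ((φ₁:ℂ)*I) * (‖v r₁‖ : ℂ)
      = Complex.exp ((φ₂:ℂ)*I) * (‖v r₁‖ : ℂ) := by rw [e₁, e₂]
  exact mul_right_cancel₀ (by exact_mod_cast ne_of_gt habspos) this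

/-- If ρ₁ ≠ ρ₂ then the closest point of P = (ρ₁ e^{iθ₁}, ρ₂ e^{iθ₂}) on Γ is
unique. -/
theorem unique_closest_point_of_ne (ρ₁ ρ₂ θ₁ θ₂ : ℝ) (h1 : 0 ≤ ρ₁) (h2 : 0 ≤ ρ₂)
    (hne : ρ₁ ≠ ρ₂) (P₁ P₂ : C2) (hP₁ : P₁ ∈ Gam) (hP₂ : P₂ ∈ Gam)
    (hd₁ : dist P₁ (ppt ρ₁ θ₁ ρ₂ θ₂) = Metric.infDist (ppt ρ₁ θ₁ ρ₂ θ₂) Gam)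
    (hd₂ : dist P₂ (ppt ρ₁ θ₁ ρ₂ θ₂) = Metric.infDist (ppt ρ₁ θ₁ ρ₂ θ₂) Gam) :
    P₁ = P₂ := by
  obtain ⟨r₁, φ₁, hr₁, rfl⟩ := hP₁
  obtain ⟨r₂, φ₂, hr₂, rfl⟩ := hP₂
  have hmem : ∀ r θ : ℝ, 0 < r → gpt r θ ∈ Gam := fun r θ hr => ⟨r, θ, hr, rfl⟩
  have mk : ∀ r₀ φ₀ : ℝ, 0 < r₀ →
      dist (gpt r₀ φ₀) (ppt ρ₁ θ₁ ρ₂ θ₂) = Metric.infDist (ppt ρ₁ θ₁ ρ₂ θ₂) Gam →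
      ∀ r θ : ℝ, 0 < r → Dfun ρ₁ θ₁ ρ₂ θ₂ r₀ φ₀ ≤ Dfun ρ₁ θ₁ ρ₂ θ₂ r θ := by
    intro r₀ φ₀ hr₀ hd r θ hr
    have hle : dist (gpt r₀ φ₀) (ppt ρ₁ θ₁ ρ₂ θ₂) ≤ dist (gpt r θ) (ppt ρ₁ θ₁ ρ₂ θ₂) := by
      rw [hd, dist_comm]
      exact Metric.infDist_le_dist_of_mem (hmem r θ hr)
    have hsq := pow_le_pow_left₀ dist_nonneg hle 2
    rwa [dist_sq_gpt r₀ φ₀ ρ₁ θ₁ ρ₂ θ₂ hr₀, dist_sq_gpt r θ ρ₁ θ₁ ρ₂ θ₂ hr] at hsq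
  have mm₁ := mk r₁ φ₁ hr₁ hd₁
  have mm₂ := mk r₂ φ₂ hr₂ hd₂
  suffices h : r₁ = r₂ ∧ Complex.exp ((φ₁:ℂ)*Complex.I) = Complex.exp ((φ₂:ℂ)*Complex.I) by
    obtain ⟨hreq, hexp⟩ := h
    subst hreq
    unfold gpt pt
    rw [hexp]
  rcases lt_trichotomy ρ₂ ρ₁ with hlt | heq | hlt
  · exact main_core ρ₁ θ₁ ρ₂ θ₂ h2 hlt r₁ φ₁ r₂ φ₂ hr₁ hr₂ mm₁ mm₂
  · exact absurd heq.symm hne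
  · have swap : ∀ r₀ φ₀ : ℝ, 0 < r₀ →
        (∀ r θ : ℝ, 0 < r → Dfun ρ₁ θ₁ ρ₂ θ₂ r₀ φ₀ ≤ Dfun ρ₁ θ₁ ρ₂ θ₂ r θ) →
        ∀ r θ : ℝ, 0 < r → Dfun ρ₂ θ₂ ρ₁ θ₁ (1/r₀) φ₀ ≤ Dfun ρ₂ θ₂ ρ₁ θ₁ r θ := by
      intro r₀ φ₀ hr₀ hm r θ hr
      calc Dfun ρ₂ θ₂ ρ₁ θ₁ (1/r₀) φ₀ = Dfun ρ₁ θ₁ ρ₂ θ₂ r₀ φ₀ :=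
            Dfun_swap ρ₁ θ₁ ρ₂ θ₂ r₀ φ₀ (ne_of_gt hr₀)
        _ ≤ Dfun ρ₁ θ₁ ρ₂ θ₂ (1/r) θ := hm (1/r) θ (by positivity)
        _ = Dfun ρ₂ θ₂ ρ₁ θ₁ r θ := Dfun_swap ρ₂ θ₂ ρ₁ θ₁ r θ (ne_of_gt hr)
    obtain ⟨hreq, hexp⟩ := main_core ρ₂ θ₂ ρ₁ θ₁ h1 hlt (1/r₁) φ₁ (1/r₂) φ₂
      (by positivity) (by positivity) (swap r₁ φ₁ hr₁ mm₁) (swap r₂ φ₂ hr₂ mm₂)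
    refine ⟨?_, hexp⟩
    field_simp at hreq
    exact hreq.symm

end
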